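/- Let n be an odd positive integer and k a positive integer with gcd(k, n) = 1, let q = 2^k, and let s be the multiplicative inverse of q − 1 modulo 2^n − 1. Let c ∈ F_{2^n}. If the equation (v + 1)^{q+1} + c·v = 0 has exactly three solutions in F_{2^n}, then every solution v of this equation satisfies Tr(v^{−s}) = 0. -/

import Mathlib

/-- For `n` odd, `gcd(k,n) = 1`, `q = 2^k`, `s` the inverse of
`q - 1` mod `2^n - 1`, and `c ∈ F_{2^n}`: if `(v+1)^(q+1) + c·v = 0` has
exactly three solutions in `F_{2^n}`, then every solution `v` satisfies
`Tr(v^{-s}) = 0`, where `Tr(x) = ∑_{i<n} x^(2^i)`. -/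
theorem three_solutions_trace_zero (n k : ℕ) (hn : 0 < n) (hnodd : Odd n)
    (hk : 0 < k) (hgcd : Nat.gcd k n = 1) (q : ℕ) (hq : q = 2 ^ k)
    (s : ℕ) (hs : (q - 1) * s ≡ 1 [MOD 2 ^ n - 1])
    (F : Type*) [Field F] [Fintype F] (hcard : Fintype.card F = 2 ^ n)
    (c : F) (h3 : {v : F | (v + 1) ^ (q + 1) + c * v = 0}.ncard = 3) :
    ∀ v : F, (v + 1) ^ (q + 1) + c * v = 0 →
      (∑ i ∈ Finset.range n, ((v⁻¹) ^ s) ^ 2 ^ i) = 0 := by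
  intro v hv
  -- characteristic 2
  have hcp := ringChar.charP F
  obtain ⟨m, hprime, hcard'⟩ := FiniteField.card F (ringChar F)
  have hr2 : ringChar F = 2 := by
    refine (Nat.prime_dvd_prime_iff_eq hprime Nat.prime_two).mp
      (hprime.dvd_of_dvd_pow (n := n) ?_)
    rw [← hcard, hcard']; exact dvd_pow_self _ m.ne_zero
  haveI : CharP F 2 := hr2 ▸ hcp
  haveI : Fact (Nat.Prime 2) := ⟨Nat.prime_two⟩
  have h2 : (2 : F) = 0 := by exact_mod_cast CharP.cast_eq_zero F 2
  -- n ≥ 2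
  have hn2 : 2 ≤ n := by
    by_contra hlt
    have hn1 : n = 1 := by omega
    have hle : {v : F | (v + 1) ^ (q + 1) + c * v = 0}.ncard ≤ 2 := by
      have := Set.ncard_le_ncard (Set.subset_univ
        {v : F | (v + 1) ^ (q + 1) + c * v = 0}) Set.finite_univ
      rwa [Set.ncard_univ, Nat.card_eq_fintype_card, hcard, hn1, pow_one] at this
    omega
  have hM2 : 2 ≤ 2 ^ n - 1 := by
    have : 4 ≤ 2 ^ n := by calc (4:ℕ) = 2^2 := rfl
                                _ ≤ 2^n := Nat.pow_le_pow_right (by norm_num) hn2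
    omega
  have hq2 : 2 ≤ q := by rw [hq]; calc (2:ℕ) = 2^1 := rfl
                                      _ ≤ 2^k := Nat.pow_le_pow_right (by norm_num) hk
  have hq1 : (q - 1) + 1 = q := by omega
  -- frobenius
  have hfrob : ∀ a b : F, (a + b) ^ q = a ^ q + b ^ q := by
    intro a b; rw [hq]; exact add_pow_char_pow a b 2 k
  -- key power fact
  have hpow : ∀ a : F, a ≠ 0 → (a ^ (q - 1)) ^ s = a := by
    intro a ha
    have hM1 : a ^ (2 ^ n - 1) = 1 := by
      rw [← hcard]; exact FiniteField.pow_card_sub_one_eq_one a ha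
    have hmod : ((q - 1) * s) % (2 ^ n - 1) = 1 := by
      have h := hs
      unfold Nat.ModEq at h
      rwa [Nat.mod_eq_of_lt (by omega : 1 < 2 ^ n - 1)] at h
    rw [← pow_mul]
    conv_lhs => rw [← Nat.div_add_mod ((q - 1) * s) (2 ^ n - 1)]
    rw [pow_add, pow_mul, hM1, one_pow, one_mul, hmod, pow_one]
  -- pick a second solution
  obtain ⟨v', hv'mem, hne⟩ := Set.exists_ne_of_one_lt_ncard (by omega : 1 <
    {v : F | (v + 1) ^ (q + 1) + c * v = 0}.ncard) v
  have hv' : (v' + 1) ^ (q + 1) + c * v' = 0 := hv'mem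
  -- c ≠ 0
  have hc : c ≠ 0 := by
    intro hc0
    have hsub : {v : F | (v + 1) ^ (q + 1) + c * v = 0} ⊆ {1} := by
      intro x hx
      simp only [Set.mem_setOf_eq, hc0, zero_mul, add_zero] at hx
      have hx1 : x + 1 = 0 := pow_eq_zero_iff (by omega) |>.mp hx
      have : x = 1 := by linear_combination hx1 - h2
      simp [this]
    have := Set.ncard_le_ncard hsub (Set.finite_singleton 1)
    rw [Set.ncard_singleton] at this
    omega
  -- nonvanishing facts
  have hv0 : v ≠ 0 := by
    intro h0; rw [h0] at hv; simp at hv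
  have hu : v + 1 ≠ 0 := by
    intro h0
    rw [h0] at hv
    have : c * v = 0 := by
      have hz : (0:F) ^ (q+1) = 0 := zero_pow (by omega)
      linear_combination hv - hz
    rcases mul_eq_zero.mp this with h | h
    · exact hc h
    · exact hv0 h
  have hv'0 : v' ≠ 0 := by
    intro h0; rw [h0] at hv'; simp at hv'
  have hu' : v' + 1 ≠ 0 := by
    intro h0
    rw [h0] at hv'
    have : c * v' = 0 := by
      have hz : (0:F) ^ (q+1) = 0 := zero_pow (by omega)
      linear_combination hv' - hz
    rcases mul_eq_zero.mp this with h | h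
    · exact hc h
    · exact hv'0 h
  set u := v + 1 with hu_def
  set u' := v' + 1 with hu'_def
  have hd : u + u' ≠ 0 := by
    intro h0
    apply hne
    have : v' = v := by
      rw [hu_def, hu'_def] at h0
      linear_combination h0 - (v + 1) * h2
    exact this
  -- equations in product form
  have E1c : u ^ q * u = c * (u + 1) := by
    rw [← pow_succ]
    linear_combination hv - (c * v + c) * h2
  have E1'c : u' ^ q * u' = c * (u' + 1) := by
    rw [← pow_succ]
    linear_combination hv' - (c * v' + c) * h2
  -- key identity
  have K : v * u' * (u ^ q + u' ^ q) = u ^ q * (u + u') := by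
    apply mul_left_cancel₀ (mul_ne_zero hu hu')
    linear_combination (u * u' * (u' - 1)) * E1c + (u * u' * (u + 1)) * E1'c
      + (c * u * u' ^ 2 * (u + 1) - u * u' ^ 2 * (u ^ q + u' ^ q)) * h2
  -- the element z with z + z^q = (v⁻¹)^s
  have hr0 : u' / u ≠ 0 := div_ne_zero hu' hu
  set z := (u' / u) ^ s with hz_def
  have hz0 : z ≠ 0 := pow_ne_zero s hr0
  have hz1 : z ^ (q - 1) = u' / u := by
    rw [hz_def, ← pow_mul, Nat.mul_comm s (q - 1), pow_mul]
    exact hpow _ hr0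
  have hzq : z ^ q = u' / u * z := by
    calc z ^ q = z ^ ((q - 1) + 1) := by rw [hq1]
      _ = z ^ (q - 1) * z := pow_succ z (q - 1)
      _ = u' / u * z := by rw [hz1]
  have h1r : (1 : F) + u' / u = (u + u') / u := by
    field_simp
  have hT0 : z * (1 + u' / u) ≠ 0 := by
    rw [h1r]; exact mul_ne_zero hz0 (div_ne_zero hd hu)
  have hXq : u ^ q ≠ 0 := pow_ne_zero q hu
  have hG : v * (u' / u) * (1 + u' ^ q / u ^ q) = 1 + u' / u := by
    field_simp
    linear_combination K
  have hTq : (z * (1 + u' / u)) ^ q = z * (u' / u) * (1 + u' ^ q / u ^ q) := by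
    rw [mul_pow, hzq, hfrob 1 (u' / u), one_pow, div_pow]
    ring
  have hvT : v * (z * (1 + u' / u)) ^ q = z * (1 + u' / u) := by
    rw [hTq]
    linear_combination z * hG
  have h1 : v * (z * (1 + u' / u)) ^ (q - 1) = 1 := by
    apply mul_right_cancel₀ hT0
    rw [one_mul]
    calc v * (z * (1 + u' / u)) ^ (q - 1) * (z * (1 + u' / u))
        = v * (z * (1 + u' / u)) ^ ((q - 1) + 1) := by ring
      _ = v * (z * (1 + u' / u)) ^ q := by rw [hq1]
      _ = z * (1 + u' / u) := hvT
  have hTinv : (z * (1 + u' / u)) ^ (q - 1) = v⁻¹ :=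
    (inv_eq_of_mul_eq_one_right h1).symm
  have hw : (v⁻¹) ^ s = z + z ^ q := by
    rw [← hTinv, hpow _ hT0, hzq]
    ring
  -- trace computation
  rw [hw]
  have hsum_add : ∑ i ∈ Finset.range n, (z + z ^ q) ^ 2 ^ i
      = (∑ i ∈ Finset.range n, z ^ 2 ^ i) + ∑ i ∈ Finset.range n, (z ^ q) ^ 2 ^ i := by
    rw [← Finset.sum_add_distrib]
    refine Finset.sum_congr rfl fun i _ => ?_
    exact add_pow_char_pow z (z ^ q) 2 i
  have hsq : ∀ a : F, ∑ i ∈ Finset.range n, (a ^ 2) ^ 2 ^ i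
      = ∑ i ∈ Finset.range n, a ^ 2 ^ i := by
    intro a
    have hterm : ∀ i, (a ^ 2) ^ 2 ^ i = a ^ 2 ^ (i + 1) := by
      intro i; rw [← pow_mul, ← pow_succ']
    have ha1 : ∑ i ∈ Finset.range (n + 1), a ^ 2 ^ i
        = (∑ i ∈ Finset.range n, a ^ 2 ^ (i + 1)) + a ^ 2 ^ 0 :=
      Finset.sum_range_succ' _ n
    have ha2 : ∑ i ∈ Finset.range (n + 1), a ^ 2 ^ i
        = (∑ i ∈ Finset.range n, a ^ 2 ^ i) + a ^ 2 ^ n :=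
      Finset.sum_range_succ _ n
    have hcardF : a ^ 2 ^ n = a := by rw [← hcard]; exact FiniteField.pow_card a
    rw [hcardF] at ha2
    simp only [pow_zero, pow_one] at ha1
    have h3' := (ha1.symm.trans ha2)
    have h4 := add_right_cancel h3'
    calc ∑ i ∈ Finset.range n, (a ^ 2) ^ 2 ^ i
        = ∑ i ∈ Finset.range n, a ^ 2 ^ (i + 1) :=
          Finset.sum_congr rfl fun i _ => hterm i
      _ = ∑ i ∈ Finset.range n, a ^ 2 ^ i := h4
  have hpj : ∀ j : ℕ, ∀ a : F, ∑ i ∈ Finset.range n, (a ^ 2 ^ j) ^ 2 ^ i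
      = ∑ i ∈ Finset.range n, a ^ 2 ^ i := by
    intro j
    induction j with
    | zero => intro a; simp
    | succ j ih =>
        intro a
        have hstep : a ^ 2 ^ (j + 1) = (a ^ 2 ^ j) ^ 2 := by
          rw [← pow_mul, pow_succ]
        rw [hstep, hsq (a ^ 2 ^ j), ih a]
  have hzqz : ∑ i ∈ Finset.range n, (z ^ q) ^ 2 ^ i
      = ∑ i ∈ Finset.range n, z ^ 2 ^ i := by
    rw [hq]; exact hpj k z
  rw [hsum_add, hzqz]
  linear_combination (∑ i ∈ Finset.range n, z ^ 2 ^ i) * h2
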